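/- For all integers k, r and s: G(0)·H(0)·I(k+r+s−2) + (G(0)·H(1) + G(1)·H(0))·I(k+r+s−1) + G(1)·H(1)·I(k+r+s) = G(s+1)·H(r+1)·I(k+1) + G(s)·H(r)·I(k) − G(s−1)·H(r−1)·I(k−1). -/

import Mathlib

theorem gib_ext (f g : ℤ → ℝ) (hf : ∀ n : ℤ, f n = f (n - 1) + f (n - 2))
    (hg : ∀ n : ℤ, g n = g (n - 1) + g (n - 2))
    (h0 : f 0 = g 0) (h1 : f 1 = g 1) : ∀ n : ℤ, f n = g n := by
  have key : ∀ n : ℤ, f n = g n ∧ f (n + 1) = g (n + 1) := by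
    intro n
    induction n using Int.induction_on with
    | zero => exact ⟨h0, h1⟩
    | succ i ih =>
      refine ⟨ih.2, ?_⟩
      have hfi := hf (i + 1 + 1); have hgi := hg (i + 1 + 1)
      have e1 : (i : ℤ) + 1 + 1 - 1 = i + 1 := by ring
      have e2 : (i : ℤ) + 1 + 1 - 2 = i := by ring
      rw [e1, e2] at hfi hgi
      rw [hfi, hgi, ih.1, ih.2]
    | pred i ih =>
      refine ⟨?_, ?_⟩
      · have hfi := hf (-(i : ℤ) + 1); have hgi := hg (-(i : ℤ) + 1)
        have e1 : -(i : ℤ) + 1 - 1 = -i := by ring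
        have e2 : -(i : ℤ) + 1 - 2 = -i - 1 := by ring
        rw [e1, e2] at hfi hgi
        have := ih.1; have := ih.2
        linarith
      · have e : -(i : ℤ) - 1 + 1 = -i := by ring
        rw [e]; exact ih.1
  exact fun n => (key n).1

/-- full generalization of Lucas's triple-angle formula to three
gibonacci sequences. -/
theorem statement17 (G H I : ℤ → ℝ)
    (hG : ∀ n : ℤ, G n = G (n - 1) + G (n - 2))
    (hH : ∀ n : ℤ, H n = H (n - 1) + H (n - 2))
    (hI : ∀ n : ℤ, I n = I (n - 1) + I (n - 2))
    (k r s : ℤ) :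
    G 0 * H 0 * I (k + r + s - 2) + (G 0 * H 1 + G 1 * H 0) * I (k + r + s - 1)
        + G 1 * H 1 * I (k + r + s) =
      G (s + 1) * H (r + 1) * I (k + 1) + G s * H r * I k
        - G (s - 1) * H (r - 1) * I (k - 1) := by
  -- level 1 : k, r ∈ {0,1}, all s
  have hs : ∀ k r : ℤ, (k = 0 ∨ k = 1) → (r = 0 ∨ r = 1) → ∀ s : ℤ,
      G 0 * H 0 * I (k + r + s - 2) + (G 0 * H 1 + G 1 * H 0) * I (k + r + s - 1)
        + G 1 * H 1 * I (k + r + s) =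
      G (s + 1) * H (r + 1) * I (k + 1) + G s * H r * I k
        - G (s - 1) * H (r - 1) * I (k - 1) := by
    intro k r hk hr
    refine gib_ext
      (fun s => G 0 * H 0 * I (k + r + s - 2) + (G 0 * H 1 + G 1 * H 0) * I (k + r + s - 1)
        + G 1 * H 1 * I (k + r + s))
      (fun s => G (s + 1) * H (r + 1) * I (k + 1) + G s * H r * I k
        - G (s - 1) * H (r - 1) * I (k - 1)) ?_ ?_ ?_ ?_
    · intro n
      linear_combination (norm := ring_nf) (G 0 * H 0) * hI (k + r + n - 2)
        + (G 0 * H 1 + G 1 * H 0) * hI (k + r + n - 1) + (G 1 * H 1) * hI (k + r + n)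
    · intro n
      linear_combination (norm := ring_nf) (H (r + 1) * I (k + 1)) * hG (n + 1)
        + (H r * I k) * hG n - (H (r - 1) * I (k - 1)) * hG (n - 1)
    · rcases hk with rfl | rfl <;> rcases hr with rfl | rfl <;>
      · have i2 : I 2 = I 1 + I 0 := by have := hI 2; norm_num at this; exact this
        have i1 : I 1 = I 0 + I (-1) := by have := hI 1; norm_num at this; exact this
        have im2 : I (-2) = I 0 - I (-1) := by have := hI 0; norm_num at this; linarith
        have g2 : G 2 = G 1 + G 0 := by have := hG 2; norm_num at this; linarith
        have gm1 : G (-1) = G 1 - G 0 := by have := hG 1; norm_num at this; linarith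
        have h2 : H 2 = H 1 + H 0 := by have := hH 2; norm_num at this; linarith
        have hm1 : H (-1) = H 1 - H 0 := by have := hH 1; norm_num at this; linarith
        norm_num
        simp only [i2, i1, im2, g2, gm1, h2, hm1]
        ring
    · rcases hk with rfl | rfl <;> rcases hr with rfl | rfl <;>
      · have i3 : I 3 = I 2 + I 1 := by have := hI 3; norm_num at this; exact this
        have i2 : I 2 = I 1 + I 0 := by have := hI 2; norm_num at this; exact this
        have i1 : I 1 = I 0 + I (-1) := by have := hI 1; norm_num at this; exact this
        have im2 : I (-2) = I 0 - I (-1) := by have := hI 0; norm_num at this; linarith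
        have g2 : G 2 = G 1 + G 0 := by have := hG 2; norm_num at this; linarith
        have gm1 : G (-1) = G 1 - G 0 := by have := hG 1; norm_num at this; linarith
        have h2 : H 2 = H 1 + H 0 := by have := hH 2; norm_num at this; linarith
        have hm1 : H (-1) = H 1 - H 0 := by have := hH 1; norm_num at this; linarith
        norm_num
        simp only [i3, i2, i1, im2, g2, gm1, h2, hm1]
        ring
  -- level 2 : k ∈ {0,1}, all r s
  have hrs : ∀ k : ℤ, (k = 0 ∨ k = 1) → ∀ s r : ℤ,
      G 0 * H 0 * I (k + r + s - 2) + (G 0 * H 1 + G 1 * H 0) * I (k + r + s - 1)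
        + G 1 * H 1 * I (k + r + s) =
      G (s + 1) * H (r + 1) * I (k + 1) + G s * H r * I k
        - G (s - 1) * H (r - 1) * I (k - 1) := by
    intro k hk s
    refine gib_ext
      (fun r => G 0 * H 0 * I (k + r + s - 2) + (G 0 * H 1 + G 1 * H 0) * I (k + r + s - 1)
        + G 1 * H 1 * I (k + r + s))
      (fun r => G (s + 1) * H (r + 1) * I (k + 1) + G s * H r * I k
        - G (s - 1) * H (r - 1) * I (k - 1)) ?_ ?_ ?_ ?_
    · intro n
      linear_combination (norm := ring_nf) (G 0 * H 0) * hI (k + n + s - 2)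
        + (G 0 * H 1 + G 1 * H 0) * hI (k + n + s - 1) + (G 1 * H 1) * hI (k + n + s)
    · intro n
      linear_combination (norm := ring_nf) (G (s + 1) * I (k + 1)) * hH (n + 1)
        + (G s * I k) * hH n - (G (s - 1) * I (k - 1)) * hH (n - 1)
    · simpa using hs k 0 hk (Or.inl rfl) s
    · simpa using hs k 1 hk (Or.inr rfl) s
  -- level 3 : all k r s
  refine gib_ext
    (fun k => G 0 * H 0 * I (k + r + s - 2) + (G 0 * H 1 + G 1 * H 0) * I (k + r + s - 1)
      + G 1 * H 1 * I (k + r + s))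
    (fun k => G (s + 1) * H (r + 1) * I (k + 1) + G s * H r * I k
      - G (s - 1) * H (r - 1) * I (k - 1)) ?_ ?_ ?_ ?_ k
  · intro n
    linear_combination (norm := ring_nf) (G 0 * H 0) * hI (n + r + s - 2)
      + (G 0 * H 1 + G 1 * H 0) * hI (n + r + s - 1) + (G 1 * H 1) * hI (n + r + s)
  · intro n
    linear_combination (norm := ring_nf) (G (s + 1) * H (r + 1)) * hI (n + 1)
      + (G s * H r) * hI n - (G (s - 1) * H (r - 1)) * hI (n - 1)
  · simpa using hrs 0 (Or.inl rfl) s r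
  · simpa using hrs 1 (Or.inr rfl) s r
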